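/- For every integer l ≥ 2, the function H_l(r) = r(I₁'(r)/I₁(r) − I_l'(r)/I_l(r)) tends to 0 as r → +∞. -/

import Mathlib

open MeasureTheory Real Filter Set

/-- Modified Bessel function of the first kind of integer order `n`,
via the standard integral representation. -/
noncomputable def besselI (n : ℕ) (r : ℝ) : ℝ :=
  (1 / π) * ∫ θ in (0:ℝ)..π, Real.exp (r * Real.cos θ) * Real.cos (n * θ)

/-- Modified Bessel function of the second kind of integer order `n`,
via the standard integral representation. -/
noncomputable def besselK (n : ℕ) (r : ℝ) : ℝ :=
  ∫ t in Set.Ioi (0:ℝ), Real.exp (-r * Real.cosh t) * Real.cosh (n * t)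

lemma one_sub_cos_eq (x : ℝ) : 1 - Real.cos x = 2 * Real.sin (x/2) ^ 2 := by
  have h := Real.cos_two_mul (x/2)
  have h2 := Real.sin_sq_add_cos_sq (x/2)
  have hx : 2 * (x/2) = x := by ring
  rw [hx] at h
  nlinarith

lemma one_sub_cos_le {x : ℝ} (hx : 0 ≤ x) : 1 - Real.cos x ≤ x^2 / 2 := by
  rw [one_sub_cos_eq]
  have h1 : Real.sin (x/2) ^ 2 ≤ (x/2) ^ 2 := Real.sin_sq_le_sq
  nlinarith

lemma le_one_sub_cos {x : ℝ} (hx : 0 ≤ x) (hx' : x ≤ π) :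
    2 * x^2 / π^2 ≤ 1 - Real.cos x := by
  rw [one_sub_cos_eq]
  have hπ : 0 < π := Real.pi_pos
  have h1 : 2/π * (x/2) ≤ Real.sin (x/2) := Real.mul_le_sin (by linarith) (by linarith)
  have h0 : 0 ≤ 2/π * (x/2) := by positivity
  have h2 : (2/π * (x/2))^2 ≤ Real.sin (x/2) ^ 2 := by
    apply sq_le_sq' <;> nlinarith
  have h3 : (2/π * (x/2))^2 = x^2/π^2 := by field_simp
  rw [h3] at h2
  calc 2 * x^2 / π^2 = 2 * (x^2/π^2) := by ring
    _ ≤ 2 * Real.sin (x/2)^2 := by linarith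

lemma sqrt_tendsto_atTop : Tendsto Real.sqrt atTop atTop := by
  apply tendsto_atTop_atTop.mpr
  intro b
  exact ⟨b^2, fun a ha => by
    calc b ≤ |b| := le_abs_self b
    _ = Real.sqrt (b^2) := (Real.sqrt_sq_eq_abs b).symm
    _ ≤ Real.sqrt a := Real.sqrt_le_sqrt ha⟩

lemma tendsto_sin_div : Tendsto (fun y : ℝ => Real.sin y / y) (nhdsWithin 0 {(0:ℝ)}ᶜ) (nhds 1) := by
  have h : HasDerivAt Real.sin 1 0 := by simpa using Real.hasDerivAt_sin 0
  have := hasDerivAt_iff_tendsto_slope.1 h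
  refine this.congr' ?_
  filter_upwards [self_mem_nhdsWithin] with y hy
  simp [slope_def_field]

lemma tendsto_one_sub_cos_div :
    Tendsto (fun x : ℝ => (1 - Real.cos x) / x^2) (nhdsWithin 0 {(0:ℝ)}ᶜ) (nhds (1/2)) := by
  have hhalf : Tendsto (fun x : ℝ => x / 2) (nhdsWithin 0 {(0:ℝ)}ᶜ) (nhdsWithin 0 {(0:ℝ)}ᶜ) := by
    apply tendsto_nhdsWithin_of_tendsto_nhds_of_eventually_within
    · have h0 : Tendsto (fun x : ℝ => x / 2) (nhds 0) (nhds 0) := by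
        simpa using (continuous_id.div_const (2:ℝ)).tendsto 0
      exact h0.mono_left nhdsWithin_le_nhds
    · filter_upwards [self_mem_nhdsWithin] with x hx
      simp only [Set.mem_compl_iff, Set.mem_singleton_iff] at hx ⊢
      exact div_ne_zero hx two_ne_zero
  have hmain : Tendsto (fun y : ℝ => (1/2) * (Real.sin y / y)^2) (nhdsWithin 0 {(0:ℝ)}ᶜ) (nhds (1/2)) := by
    have := (tendsto_sin_div.pow 2).const_mul (1/2 : ℝ)
    simpa using this
  refine (hmain.comp hhalf).congr' ?_
  filter_upwards [self_mem_nhdsWithin] with x hx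
  simp only [Set.mem_compl_iff, Set.mem_singleton_iff] at hx
  rw [one_sub_cos_eq]
  simp only [Function.comp_apply]
  field_simp

lemma tendsto_div_sqrt {s : ℝ} (hs : 0 < s) :
    Tendsto (fun r : ℝ => s / Real.sqrt r) atTop (nhdsWithin 0 {(0:ℝ)}ᶜ) := by
  apply tendsto_nhdsWithin_of_tendsto_nhds_of_eventually_within
  · exact Tendsto.div_atTop tendsto_const_nhds sqrt_tendsto_atTop
  · filter_upwards [eventually_ge_atTop (1:ℝ)] with r hr
    have h1 : 0 < Real.sqrt r := Real.sqrt_pos.2 (by linarith)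
    simp only [Set.mem_compl_iff, Set.mem_singleton_iff]
    positivity

lemma tendsto_r_one_sub_cos {s : ℝ} (hs : 0 < s) :
    Tendsto (fun r : ℝ => r * (1 - Real.cos (s / Real.sqrt r))) atTop (nhds (s^2/2)) := by
  have h := (tendsto_one_sub_cos_div.comp (tendsto_div_sqrt hs)).const_mul (s^2)
  have h2 : s^2 * (1/2) = s^2/2 := by ring
  rw [h2] at h
  refine h.congr' ?_
  filter_upwards [eventually_ge_atTop (1:ℝ)] with r hr
  have hr0 : (0:ℝ) ≤ r := by linarith
  have h1 : 0 < Real.sqrt r := Real.sqrt_pos.2 (by linarith)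
  have h3 : Real.sqrt r ^ 2 = r := Real.sq_sqrt hr0
  simp only [Function.comp_apply]
  field_simp
  rw [h3]; ring

lemma integrableOn_sq_gauss {b : ℝ} (hb : 0 < b) :
    IntegrableOn (fun s : ℝ => s^2 * Real.exp (-b * s^2)) (Ioi 0) := by
  have h := integrableOn_rpow_mul_exp_neg_mul_sq hb (show (-1:ℝ) < 2 by norm_num)
  refine h.congr_fun (fun x hx => ?_) measurableSet_Ioi
  simp only [show ((2:ℝ) = ((2:ℕ):ℝ)) by norm_num, Real.rpow_natCast]

lemma integrableOn_gauss {b : ℝ} (hb : 0 < b) :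
    IntegrableOn (fun s : ℝ => Real.exp (-b * s^2)) (Ioi 0) :=
  (integrable_exp_neg_mul_sq hb).integrableOn

lemma bound_int (c₁ c₂ : ℝ) :
    IntegrableOn (fun s : ℝ => (c₁ + c₂ * s^2) * Real.exp (-(2/π^2) * s^2)) (Ioi 0) := by
  have hb : (0:ℝ) < 2/π^2 := by positivity
  have h : IntegrableOn
      (fun s : ℝ => c₁ * Real.exp (-(2/π^2) * s^2) + c₂ * (s^2 * Real.exp (-(2/π^2) * s^2)))
      (Ioi 0) := by
    exact ((integrableOn_gauss hb).const_mul c₁).add ((integrableOn_sq_gauss hb).const_mul c₂)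
  refine h.congr_fun (fun x _ => ?_) measurableSet_Ioi
  ring

noncomputable def Kg : ℝ := ∫ s in Ioi (0:ℝ), Real.exp (-(1/2) * s^2)

lemma Kg_pos : 0 < Kg := by
  rw [Kg]
  apply setIntegral_pos_iff_support_of_nonneg_ae ?_ ?_ |>.2
  · have : (Function.support fun s : ℝ => Real.exp (-(1/2) * s^2)) = Set.univ := by
      ext x; simp [Function.mem_support, Real.exp_ne_zero]
    rw [this]
    simp
  · filter_upwards with x using (Real.exp_pos _).le
  · exact integrableOn_gauss (by norm_num)

lemma tendsto_neg_mul_gauss : Tendsto (fun s : ℝ => -s * Real.exp (-(1/2) * s^2)) atTop (nhds 0) := by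
  have h1 : Tendsto (fun s : ℝ => s * Real.exp (-(1/2) * s^2)) atTop (nhds 0) := by
    have hup : Tendsto (fun s : ℝ => 2 * ((s/2) * Real.exp (-(s/2)))) atTop (nhds 0) := by
      have := (Real.tendsto_pow_mul_exp_neg_atTop_nhds_zero 1).comp
        (tendsto_id.atTop_div_const (show (0:ℝ) < 2 by norm_num))
      simpa using this.const_mul 2
    apply tendsto_of_tendsto_of_tendsto_of_le_of_le' tendsto_const_nhds hup
    · filter_upwards [eventually_ge_atTop (0:ℝ)] with s hs
      positivity
    · filter_upwards [eventually_ge_atTop (1:ℝ)] with s hs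
      have h2 : Real.exp (-(1/2)*s^2) ≤ Real.exp (-(s/2)) := by
        apply Real.exp_le_exp.2; nlinarith
      calc s * Real.exp (-(1/2)*s^2) ≤ s * Real.exp (-(s/2)) :=
            mul_le_mul_of_nonneg_left h2 (by linarith)
        _ = 2 * ((s/2) * Real.exp (-(s/2))) := by ring
  have := h1.neg
  simpa using this.congr (fun s => by ring)

lemma moment_eq : ∫ s in Ioi (0:ℝ), s^2 * Real.exp (-(1/2) * s^2) = Kg := by
  have hderiv : ∀ x ∈ Ici (0:ℝ), HasDerivAt (fun s : ℝ => -s * Real.exp (-(1/2) * s^2))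
      ((x^2 - 1) * Real.exp (-(1/2) * x^2)) x := by
    intro x _
    have h1 : HasDerivAt (fun s : ℝ => -(1/2) * s^2) (-x) x := by
      simpa using ((hasDerivAt_pow 2 x).const_mul (-(1/2):ℝ))
    have h2 := h1.exp
    have h3 := ((hasDerivAt_id x).neg).mul h2
    refine h3.congr_deriv ?_
    simp only [Pi.neg_apply, id_eq]
    ring
  have hint : IntegrableOn (fun x : ℝ => (x^2 - 1) * Real.exp (-(1/2) * x^2)) (Ioi 0) := by
    have h : IntegrableOn
        (fun s : ℝ => s^2 * Real.exp (-(1/2) * s^2) - Real.exp (-(1/2) * s^2)) (Ioi 0) :=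
      (integrableOn_sq_gauss (by norm_num)).sub (integrableOn_gauss (by norm_num))
    refine h.congr_fun (fun x _ => ?_) measurableSet_Ioi
    ring
  have key := integral_Ioi_of_hasDerivAt_of_tendsto' hderiv hint tendsto_neg_mul_gauss
  simp only [neg_zero, zero_mul, sub_zero] at key
  have hsplit : ∫ x in Ioi (0:ℝ), (x^2 - 1) * Real.exp (-(1/2) * x^2)
      = (∫ s in Ioi (0:ℝ), s^2 * Real.exp (-(1/2) * s^2)) - Kg := by
    rw [Kg, ← integral_sub (integrableOn_sq_gauss (by norm_num)) (integrableOn_gauss (by norm_num))]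
    exact setIntegral_congr_fun measurableSet_Ioi (fun x _ => by ring)
  rw [hsplit] at key
  linarith

lemma laplace_main (G : ℝ → ℝ → ℝ) (γ : ℝ → ℝ) (c₁ c₂ : ℝ) (hc₁ : 0 ≤ c₁) (hc₂ : 0 ≤ c₂)
    (hcont : ∀ r : ℝ, 1 ≤ r → Continuous (G r))
    (hbound : ∀ r : ℝ, 1 ≤ r → ∀ θ ∈ Icc (0:ℝ) π, |G r θ| ≤ c₁ + c₂ * (r * θ^2))
    (hγ : ∀ s : ℝ, 0 < s → Tendsto (fun r : ℝ => G r (s / Real.sqrt r)) atTop (nhds (γ s))) :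
    Tendsto (fun r : ℝ => Real.sqrt r * Real.exp (-r) *
        ∫ θ in (0:ℝ)..π, Real.exp (r * Real.cos θ) * G r θ)
      atTop (nhds (∫ s in Ioi (0:ℝ), Real.exp (-(1/2) * s^2) * γ s)) := by
  set F : ℝ → ℝ → ℝ := fun r s => Set.indicator (Ioc (0:ℝ) (π * Real.sqrt r))
    (fun s => Real.exp (r * Real.cos (s / Real.sqrt r) - r) * G r (s / Real.sqrt r)) s with hF
  have key : Tendsto (fun r : ℝ => ∫ s in Ioi (0:ℝ), F r s) atTop
      (nhds (∫ s in Ioi (0:ℝ), Real.exp (-(1/2) * s^2) * γ s)) := by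
    apply tendsto_integral_filter_of_dominated_convergence
      (bound := fun s : ℝ => (c₁ + c₂ * s^2) * Real.exp (-(2/π^2) * s^2))
    · -- measurability
      filter_upwards [eventually_ge_atTop (1:ℝ)] with r hr
      apply AEStronglyMeasurable.indicator ?_ measurableSet_Ioc
      apply Continuous.aestronglyMeasurable
      exact (Real.continuous_exp.comp ((continuous_const.mul
        (Real.continuous_cos.comp (continuous_id.div_const _))).sub continuous_const)).mul
        ((hcont r hr).comp (continuous_id.div_const _))
    · -- bound
      filter_upwards [eventually_ge_atTop (1:ℝ)] with r hr
      filter_upwards [ae_restrict_mem measurableSet_Ioi] with s hs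
      have hr0 : (0:ℝ) < r := by linarith
      have hsq : Real.sqrt r ^ 2 = r := Real.sq_sqrt hr0.le
      have hsqpos : 0 < Real.sqrt r := Real.sqrt_pos.2 hr0
      by_cases hmem : s ∈ Ioc (0:ℝ) (π * Real.sqrt r)
      · rw [hF]
        simp only [Set.indicator_of_mem hmem]
        set x := s / Real.sqrt r with hx
        have hx0 : 0 ≤ x := div_nonneg (le_of_lt hmem.1) hsqpos.le
        have hxπ : x ≤ π := by
          rw [hx, div_le_iff₀ hsqpos]
          exact hmem.2
        have hxs : r * x^2 = s^2 := by
          rw [hx]; field_simp; rw [hsq]; ring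
        have hG : |G r x| ≤ c₁ + c₂ * s^2 := by
          have := hbound r hr x ⟨hx0, hxπ⟩
          rwa [hxs] at this
        have hexp : Real.exp (r * Real.cos x - r) ≤ Real.exp (-(2/π^2) * s^2) := by
          apply Real.exp_le_exp.2
          have h1 : 2 * x^2 / π^2 ≤ 1 - Real.cos x := le_one_sub_cos hx0 hxπ
          have h2 : r * Real.cos x - r = -(r * (1 - Real.cos x)) := by ring
          rw [h2]
          have h3 : r * (2 * x^2 / π^2) ≤ r * (1 - Real.cos x) :=
            mul_le_mul_of_nonneg_left h1 hr0.le
          have h4 : r * (2 * x^2 / π^2) = 2/π^2 * s^2 := by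
            rw [← hxs]; ring
          linarith
        rw [Real.norm_eq_abs, abs_mul, abs_of_nonneg (Real.exp_pos _).le]
        calc Real.exp (r * Real.cos x - r) * |G r x|
            ≤ Real.exp (-(2/π^2) * s^2) * (c₁ + c₂ * s^2) := by
              apply mul_le_mul hexp hG (abs_nonneg _) (Real.exp_pos _).le
          _ = (c₁ + c₂ * s^2) * Real.exp (-(2/π^2) * s^2) := by ring
      · rw [hF]
        simp only [Set.indicator_of_notMem hmem]
        rw [norm_zero]
        positivity
    · exact bound_int c₁ c₂
    · -- pointwise limit
      filter_upwards [ae_restrict_mem measurableSet_Ioi] with s hs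
      have hs0 : 0 < s := hs
      have hlim : Tendsto (fun r : ℝ => Real.exp (r * Real.cos (s / Real.sqrt r) - r)
          * G r (s / Real.sqrt r)) atTop (nhds (Real.exp (-(1/2) * s^2) * γ s)) := by
        have h1 : Tendsto (fun r : ℝ => r * Real.cos (s / Real.sqrt r) - r) atTop
            (nhds (-(1/2) * s^2)) := by
          have h := (tendsto_r_one_sub_cos hs0).neg
          have heq : -(s^2/2) = -(1/2) * s^2 := by ring
          rw [heq] at h
          exact h.congr (fun r => by ring)
        exact ((Real.continuous_exp.tendsto _).comp h1).mul (hγ s hs0)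
      refine hlim.congr' ?_
      filter_upwards [eventually_ge_atTop (max 1 ((s/π)^2))] with r hr
      have hr1 : (1:ℝ) ≤ r := le_trans (le_max_left _ _) hr
      have hmem : s ∈ Ioc (0:ℝ) (π * Real.sqrt r) := by
        refine ⟨hs0, ?_⟩
        have h2 : Real.sqrt ((s/π)^2) ≤ Real.sqrt r :=
          Real.sqrt_le_sqrt (le_trans (le_max_right _ _) hr)
        rw [Real.sqrt_sq (by positivity)] at h2
        calc s = π * (s/π) := by field_simp
          _ ≤ π * Real.sqrt r := by
              apply mul_le_mul_of_nonneg_left h2 Real.pi_pos.le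
      rw [hF]
      simp only [Set.indicator_of_mem hmem]
  refine key.congr' ?_
  filter_upwards [eventually_ge_atTop (1:ℝ)] with r hr
  have hr0 : (0:ℝ) < r := by linarith
  have hsqpos : 0 < Real.sqrt r := Real.sqrt_pos.2 hr0
  have step1 : Real.sqrt r * Real.exp (-r) * ∫ θ in (0:ℝ)..π, Real.exp (r * Real.cos θ) * G r θ
      = Real.sqrt r * ∫ θ in (0:ℝ)..π, Real.exp (r * Real.cos θ - r) * G r θ := by
    rw [mul_assoc, ← intervalIntegral.integral_const_mul]
    congr 1
    apply intervalIntegral.integral_congr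
    intro θ _
    show Real.exp (-r) * (Real.exp (r * Real.cos θ) * G r θ)
        = Real.exp (r * Real.cos θ - r) * G r θ
    rw [← mul_assoc, ← Real.exp_add, show -r + r * Real.cos θ = r * Real.cos θ - r from by ring]
  have step2 : (∫ s in (0:ℝ)..(π * Real.sqrt r),
        Real.exp (r * Real.cos (s / Real.sqrt r) - r) * G r (s / Real.sqrt r))
      = Real.sqrt r * ∫ θ in (0:ℝ)..π, Real.exp (r * Real.cos θ - r) * G r θ := by
    have := intervalIntegral.integral_comp_div (a := (0:ℝ)) (b := π * Real.sqrt r)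
      (fun θ => Real.exp (r * Real.cos θ - r) * G r θ) (ne_of_gt hsqpos)
    rw [this]
    rw [zero_div, mul_div_assoc, div_self (ne_of_gt hsqpos), mul_one]
    simp [smul_eq_mul]
  have step3 : (∫ s in (0:ℝ)..(π * Real.sqrt r),
        Real.exp (r * Real.cos (s / Real.sqrt r) - r) * G r (s / Real.sqrt r))
      = ∫ s in Ioi (0:ℝ), F r s := by
    rw [intervalIntegral.integral_of_le (by positivity), hF]
    rw [setIntegral_indicator measurableSet_Ioc]
    rw [inter_eq_self_of_subset_right Ioc_subset_Ioi_self]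
  rw [step1, ← step2, step3]

noncomputable def Phi (n : ℕ) (r : ℝ) : ℝ :=
  ∫ θ in (0:ℝ)..π, Real.exp (r * Real.cos θ) * Real.cos (n * θ)

noncomputable def Phi' (n : ℕ) (r : ℝ) : ℝ :=
  ∫ θ in (0:ℝ)..π, Real.exp (r * Real.cos θ) * (Real.cos θ * Real.cos (n * θ))

lemma tendsto_N (n : ℕ) :
    Tendsto (fun r : ℝ => Real.sqrt r * Real.exp (-r) * Phi n r) atTop (nhds Kg) := by
  have h := laplace_main (fun r θ => Real.cos (n * θ)) (fun _ => 1) 1 0 zero_le_one le_rfl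
    (fun r _ => Real.continuous_cos.comp (continuous_const.mul continuous_id))
    (fun r _ θ _ => by simpa using Real.abs_cos_le_one (n * θ))
    (fun s hs => ?_)
  · have heq : (∫ s in Ioi (0:ℝ), Real.exp (-(1/2) * s^2) * 1) = Kg := by
      rw [Kg]; simp
    rw [heq] at h
    exact h
  · have h1 : Tendsto (fun r : ℝ => (n : ℝ) * (s / Real.sqrt r)) atTop (nhds 0) := by
      have := ((tendsto_div_sqrt hs).mono_right nhdsWithin_le_nhds).const_mul (n : ℝ)
      simpa using this
    have := (Real.continuous_cos.tendsto 0).comp h1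
    simpa [Function.comp_def] using this

lemma tendsto_M (n : ℕ) :
    Tendsto (fun r : ℝ => Real.sqrt r * Real.exp (-r) * (r * (Phi n r - Phi' n r)))
      atTop (nhds (Kg/2)) := by
  have h := laplace_main (fun r θ => r * (Real.cos (n * θ) * (1 - Real.cos θ)))
    (fun s => s^2/2) 0 (1/2) le_rfl (by norm_num)
    (fun r _ => continuous_const.mul ((Real.continuous_cos.comp
      (continuous_const.mul continuous_id)).mul
      (continuous_const.sub Real.continuous_cos)))
    (fun r hr θ hθ => ?_) (fun s hs => ?_)
  · have heq : (∫ s in Ioi (0:ℝ), Real.exp (-(1/2) * s^2) * (s^2/2)) = Kg/2 := by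
      have h2 : (∫ s in Ioi (0:ℝ), Real.exp (-(1/2) * s^2) * (s^2/2))
          = (1/2) * ∫ s in Ioi (0:ℝ), s^2 * Real.exp (-(1/2) * s^2) := by
        rw [← MeasureTheory.integral_const_mul]
        exact setIntegral_congr_fun measurableSet_Ioi (fun x _ => by ring)
      rw [h2, moment_eq]
      ring
    rw [heq] at h
    refine h.congr (fun r => ?_)
    have hi1 : IntervalIntegrable
        (fun θ : ℝ => Real.exp (r * Real.cos θ) * Real.cos ((n:ℝ) * θ)) volume 0 π :=
      ((Real.continuous_exp.comp (continuous_const.mul Real.continuous_cos)).mul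
        (Real.continuous_cos.comp (continuous_const.mul continuous_id))).intervalIntegrable _ _
    have hi2 : IntervalIntegrable
        (fun θ : ℝ => Real.exp (r * Real.cos θ) * (Real.cos θ * Real.cos ((n:ℝ) * θ)))
        volume 0 π :=
      ((Real.continuous_exp.comp (continuous_const.mul Real.continuous_cos)).mul
        (Real.continuous_cos.mul (Real.continuous_cos.comp
          (continuous_const.mul continuous_id)))).intervalIntegrable _ _
    congr 1
    rw [Phi, Phi', ← intervalIntegral.integral_sub hi1 hi2,
      ← intervalIntegral.integral_const_mul]
    apply intervalIntegral.integral_congr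
    intro θ _
    show Real.exp (r * Real.cos θ) * (r * (Real.cos ((n:ℝ)*θ) * (1 - Real.cos θ)))
        = r * (Real.exp (r * Real.cos θ) * Real.cos ((n:ℝ)*θ)
            - Real.exp (r * Real.cos θ) * (Real.cos θ * Real.cos ((n:ℝ)*θ)))
    ring
  · -- bound
    have hθ0 : 0 ≤ θ := hθ.1
    have h1 : |Real.cos ((n:ℝ) * θ)| ≤ 1 := Real.abs_cos_le_one _
    have h2 : 0 ≤ 1 - Real.cos θ := by
      have := Real.cos_le_one θ; linarith
    have h3 : 1 - Real.cos θ ≤ θ^2/2 := one_sub_cos_le hθ0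
    have hr0 : (0:ℝ) < r := by linarith
    rw [abs_mul, abs_of_nonneg hr0.le, abs_mul, abs_of_nonneg h2]
    calc r * (|Real.cos ((n:ℝ) * θ)| * (1 - Real.cos θ)) ≤ r * (1 * (θ^2/2)) := by
          apply mul_le_mul_of_nonneg_left ?_ hr0.le
          exact mul_le_mul h1 h3 h2 zero_le_one
      _ = 0 + 1/2 * (r * θ^2) := by ring
  · -- pointwise limit
    have h1 : Tendsto (fun r : ℝ => Real.cos ((n:ℝ) * (s / Real.sqrt r))) atTop (nhds 1) := by
      have h0 : Tendsto (fun r : ℝ => (n : ℝ) * (s / Real.sqrt r)) atTop (nhds 0) := by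
        have := ((tendsto_div_sqrt hs).mono_right nhdsWithin_le_nhds).const_mul (n : ℝ)
        simpa using this
      have := (Real.continuous_cos.tendsto 0).comp h0
      simpa [Function.comp_def] using this
    have h2 := h1.mul (tendsto_r_one_sub_cos hs)
    rw [one_mul] at h2
    refine h2.congr (fun r => by ring)

lemma besselI_hasDerivAt (n : ℕ) (r : ℝ) :
    HasDerivAt (besselI n) ((1/π) * Phi' n r) r := by
  have heq : besselI n = fun x : ℝ =>
      (1/π) * ∫ θ in (0:ℝ)..π, Real.exp (x * Real.cos θ) * Real.cos (n * θ) := rfl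
  rw [heq]
  have cone : ∀ x : ℝ, Continuous
      (fun θ : ℝ => Real.exp (x * Real.cos θ) * Real.cos ((n:ℝ) * θ)) := fun x =>
    (Real.continuous_exp.comp (continuous_const.mul Real.continuous_cos)).mul
      (Real.continuous_cos.comp (continuous_const.mul continuous_id))
  have ctwo : Continuous
      (fun θ : ℝ => Real.exp (r * Real.cos θ) * (Real.cos θ * Real.cos ((n:ℝ) * θ))) :=
    (Real.continuous_exp.comp (continuous_const.mul Real.continuous_cos)).mul
      (Real.continuous_cos.mul (Real.continuous_cos.comp (continuous_const.mul continuous_id)))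
  have main := intervalIntegral.hasDerivAt_integral_of_dominated_loc_of_deriv_le
    (F := fun x θ => Real.exp (x * Real.cos θ) * Real.cos ((n:ℝ) * θ))
    (F' := fun x θ => Real.exp (x * Real.cos θ) * (Real.cos θ * Real.cos ((n:ℝ) * θ)))
    (x₀ := r) (a := 0) (b := π) (μ := volume) (bound := fun _ => Real.exp (|r| + 1))
    (s := Metric.ball r 1) (Metric.ball_mem_nhds r one_pos)
    (Filter.Eventually.of_forall (fun x => (cone x).aestronglyMeasurable))
    ((cone r).intervalIntegrable _ _)
    ctwo.aestronglyMeasurable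
    ?_ (intervalIntegrable_const) ?_
  · exact main.2.const_mul (1/π)
  · filter_upwards with θ _ x hx
    rw [Real.norm_eq_abs, abs_mul, abs_mul, abs_of_nonneg (Real.exp_pos _).le]
    have hxr : |x| ≤ |r| + 1 := by
      have := mem_ball_iff_norm.1 hx
      rw [Real.norm_eq_abs] at this
      calc |x| = |r + (x - r)| := by ring_nf
        _ ≤ |r| + |x - r| := abs_add_le _ _
        _ ≤ |r| + 1 := by linarith
    have h1 : x * Real.cos θ ≤ |r| + 1 := by
      calc x * Real.cos θ ≤ |x * Real.cos θ| := le_abs_self _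
        _ = |x| * |Real.cos θ| := abs_mul _ _
        _ ≤ (|r| + 1) * 1 := mul_le_mul hxr (Real.abs_cos_le_one _) (abs_nonneg _)
            (by positivity)
        _ = |r| + 1 := mul_one _
    calc Real.exp (x * Real.cos θ) * (|Real.cos θ| * |Real.cos ((n:ℝ) * θ)|)
        ≤ Real.exp (|r| + 1) * 1 := by
          apply mul_le_mul (Real.exp_le_exp.2 h1) ?_ (by positivity) (Real.exp_pos _).le
          calc |Real.cos θ| * |Real.cos ((n:ℝ) * θ)| ≤ 1 * 1 :=
                mul_le_mul (Real.abs_cos_le_one _) (Real.abs_cos_le_one _) (abs_nonneg _)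
                  zero_le_one
            _ = 1 := mul_one _
      _ = Real.exp (|r| + 1) := mul_one _
  · filter_upwards with θ _ x _
    have h1 : HasDerivAt (fun y : ℝ => y * Real.cos θ) (Real.cos θ) x := by
      simpa using (hasDerivAt_id x).mul_const (Real.cos θ)
    have h2 := (h1.exp).mul_const (Real.cos ((n:ℝ) * θ))
    refine h2.congr_deriv ?_
    ring

theorem stmt_16 (l : ℕ) (hl : 2 ≤ l) :
    Filter.Tendsto
      (fun r : ℝ => r * (deriv (besselI 1) r / besselI 1 r -
        deriv (besselI l) r / besselI l r))
      Filter.atTop (nhds 0) := by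
  have hK := Kg_pos
  have hT1 := (tendsto_M 1).div (tendsto_N 1) (ne_of_gt hK)
  have hTl := (tendsto_M l).div (tendsto_N l) (ne_of_gt hK)
  have hdiff := hTl.sub hT1
  rw [sub_self] at hdiff
  refine Filter.Tendsto.congr' ?_ hdiff
  filter_upwards [eventually_ge_atTop (1:ℝ),
    (tendsto_N 1).eventually (eventually_gt_nhds (half_lt_self hK)),
    (tendsto_N l).eventually (eventually_gt_nhds (half_lt_self hK))] with r hr h1 h2
  have hr0 : (0:ℝ) < r := by linarith
  have hc : 0 < Real.sqrt r * Real.exp (-r) := by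
    have := Real.sqrt_pos.2 hr0
    positivity
  have hP1 : (0:ℝ) < Phi 1 r := by
    by_contra hcon
    push_neg at hcon
    have : Real.sqrt r * Real.exp (-r) * Phi 1 r ≤ 0 :=
      mul_nonpos_of_nonneg_of_nonpos hc.le hcon
    linarith
  have hPl : (0:ℝ) < Phi l r := by
    by_contra hcon
    push_neg at hcon
    have : Real.sqrt r * Real.exp (-r) * Phi l r ≤ 0 :=
      mul_nonpos_of_nonneg_of_nonpos hc.le hcon
    linarith
  have hd1 : deriv (besselI 1) r = (1/π) * Phi' 1 r := (besselI_hasDerivAt 1 r).deriv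
  have hdl : deriv (besselI l) r = (1/π) * Phi' l r := (besselI_hasDerivAt l r).deriv
  have hb1 : besselI 1 r = (1/π) * Phi 1 r := rfl
  have hbl : besselI l r = (1/π) * Phi l r := rfl
  rw [hd1, hdl, hb1, hbl]
  have hπ : (π:ℝ) ≠ 0 := Real.pi_ne_zero
  simp only [Pi.div_apply]
  field_simp
  ring
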